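/- The operator norm of the indefinite integration operator R on L^2(-1,1), (Rφ)(x) = ∫_{-1}^x φ(s) ds, equals 4/π. -/

import Mathlib

open MeasureTheory Set Real ENNReal NNReal

noncomputable def ph0 : ℝ → ℝ := fun s => Real.cos (π/4 * s + π/4)
noncomputable def ps0 : ℝ → ℝ := fun s => Real.sin (π/4 * s + π/4)

lemma pi4_ne : (π/4 : ℝ) ≠ 0 := by positivity

lemma L1 (x : ℝ) : ∫ s in (-1:ℝ)..x, ph0 s = 4/π * ps0 x := by
  unfold ph0 ps0
  rw [intervalIntegral.integral_comp_mul_add Real.cos pi4_ne (π/4)]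
  rw [integral_cos]
  have : π/4 * (-1) + π/4 = 0 := by ring
  rw [this, Real.sin_zero]
  rw [smul_eq_mul]
  ring_nf

lemma L2 : ∫ x in (-1:ℝ)..1, ph0 x ^ 2 = 1 := by
  unfold ph0
  rw [intervalIntegral.integral_comp_mul_add (fun y => Real.cos y ^ 2) pi4_ne (π/4)]
  have h1 : π/4 * (-1) + π/4 = 0 := by ring
  have h2 : π/4 * 1 + π/4 = π/2 := by ring
  rw [h1, h2, integral_cos_sq]
  rw [Real.cos_pi_div_two, Real.cos_zero, Real.sin_zero]
  have hπ : (π:ℝ) ≠ 0 := Real.pi_ne_zero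
  field_simp
  ring_nf
  exact mul_inv_cancel₀ hπ

lemma L3 : ∫ x in (-1:ℝ)..1, ps0 x ^ 2 = 1 := by
  unfold ps0
  rw [intervalIntegral.integral_comp_mul_add (fun y => Real.sin y ^ 2) pi4_ne (π/4)]
  have h1 : π/4 * (-1) + π/4 = 0 := by ring
  have h2 : π/4 * 1 + π/4 = π/2 := by ring
  rw [h1, h2, integral_sin_sq]
  rw [Real.cos_pi_div_two, Real.sin_zero]
  have hπ : (π:ℝ) ≠ 0 := Real.pi_ne_zero
  field_simp
  ring_nf
  exact mul_inv_cancel₀ hπ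

lemma L4 (s : ℝ) : ∫ x in s..(1:ℝ), ps0 x = 4/π * ph0 s := by
  unfold ph0 ps0
  rw [intervalIntegral.integral_comp_mul_add Real.sin pi4_ne (π/4)]
  rw [integral_sin]
  have h2 : π/4 * 1 + π/4 = π/2 := by ring
  rw [h2, Real.cos_pi_div_two, smul_eq_mul]
  ring_nf

noncomputable abbrev μ01 : Measure ℝ := volume.restrict (Ioo (-1 : ℝ) 1)

instance : IsFiniteMeasure μ01 := by
  constructor
  rw [Measure.restrict_apply_univ, Real.volume_Ioo]
  exact ENNReal.ofReal_lt_top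

lemma memLp_of_continuous {f : ℝ → ℝ} (hf : Continuous f) : MemLp f 2 μ01 := by
  obtain ⟨C, hC⟩ := (isCompact_Icc (a := (-1:ℝ)) (b := 1)).exists_bound_of_continuousOn hf.continuousOn
  refine MemLp.of_bound hf.aestronglyMeasurable C ?_
  filter_upwards [ae_restrict_mem measurableSet_Ioo] with x hx
  exact hC x (Ioo_subset_Icc_self hx)

lemma elpnorm_toReal_of_continuous {f : ℝ → ℝ} (hf : Continuous f) :
    (eLpNorm f 2 μ01).toReal = (∫ x in (-1:ℝ)..1, f x ^ 2) ^ (2:ℝ)⁻¹ := by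
  rw [(memLp_of_continuous hf).eLpNorm_eq_integral_rpow_norm (by norm_num) (by norm_num)]
  rw [ENNReal.toReal_ofReal (by positivity)]
  simp only [ENNReal.toReal_ofNat]
  congr 1
  rw [intervalIntegral.integral_of_le (by norm_num : (-1:ℝ) ≤ 1),
    ← MeasureTheory.integral_Ioc_eq_integral_Ioo]
  congr 1
  ext x
  rw [Real.rpow_two, Real.norm_eq_abs, sq_abs]

lemma ph0_norm : (eLpNorm ph0 2 μ01).toReal = 1 := by
  rw [elpnorm_toReal_of_continuous (by unfold ph0; continuity), L2, Real.one_rpow]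

lemma Rph0_norm : (eLpNorm (fun x => ∫ s in (-1:ℝ)..x, ph0 s) 2 μ01).toReal = 4/π := by
  have hfun : (fun x => ∫ s in (-1:ℝ)..x, ph0 s) = fun x => 4/π * ps0 x := funext L1
  rw [hfun, elpnorm_toReal_of_continuous (by unfold ps0; fun_prop)]
  have : ∫ x in (-1:ℝ)..1, (4/π * ps0 x) ^ 2 = (4/π)^2 := by
    have := L3
    rw [show (fun x => (4/π * ps0 x)^2) = fun x => (4/π)^2 * ps0 x ^2 by ext x; ring]
    rw [intervalIntegral.integral_const_mul, L3, mul_one]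
  rw [this]
  rw [← Real.rpow_natCast (4/π) 2, ← Real.rpow_mul (by positivity)]
  norm_num

lemma ph0_pos {s : ℝ} (h1 : -1 < s) (h2 : s < 1) : 0 < ph0 s := by
  have := Real.pi_pos
  refine Real.cos_pos_of_mem_Ioo (Set.mem_Ioo.mpr ⟨by nlinarith, by nlinarith⟩)

lemma ps0_nonneg {x : ℝ} (h1 : -1 ≤ x) (h2 : x ≤ 1) : 0 ≤ ps0 x := by
  have := Real.pi_pos
  exact Real.sin_nonneg_of_nonneg_of_le_pi (by nlinarith) (by nlinarith)

lemma upper (φ : ℝ → ℝ) (hφ : MemLp φ 2 μ01)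
    (hn : (eLpNorm φ 2 μ01).toReal = 1) :
    (eLpNorm (fun x => ∫ s in (-1:ℝ)..x, φ s) 2 μ01).toReal ≤ 4/π := by
  have hπ := Real.pi_pos
  -- notation
  set F : ℝ → ℝ≥0∞ := fun s => (‖φ s‖₊ : ℝ≥0∞)^(2:ℝ) * (ENNReal.ofReal (ph0 s))⁻¹ with hF
  set A : ℝ → ℝ≥0∞ := fun x => ENNReal.ofReal (4/π * ps0 x) with hA
  set K : ℝ → ℝ → ℝ≥0∞ := fun x s => A x * (Ioc (-1:ℝ) x).indicator F s with hK
  have hAne : ∀ x, A x ≠ ⊤ := fun x => ENNReal.ofReal_ne_top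
  -- the L² norm of φ as a lintegral
  have key : ∫⁻ s, (‖φ s‖₊ : ℝ≥0∞)^(2:ℝ) ∂μ01 = 1 := by
    have e1 : eLpNorm φ 2 μ01 = 1 := (ENNReal.toReal_eq_one_iff _).mp hn
    rw [eLpNorm_eq_lintegral_rpow_enorm_toReal (by norm_num) (by norm_num)] at e1
    simp only [ENNReal.toReal_ofNat] at e1
    calc ∫⁻ s, (‖φ s‖₊ : ℝ≥0∞)^(2:ℝ) ∂μ01
        = ((∫⁻ s, (‖φ s‖₊ : ℝ≥0∞)^(2:ℝ) ∂μ01) ^ ((1:ℝ)/2)) ^ (2:ℝ) := by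
          rw [← ENNReal.rpow_mul]; norm_num
      _ = 1 := by simp only [← enorm_eq_nnnorm]; rw [e1]; simp
  -- pointwise Cauchy-Schwarz bound
  have hph0c : Continuous ph0 := by unfold ph0; fun_prop
  have hrestr : ∀ x ∈ Ioo (-1:ℝ) 1,
      μ01.restrict (Ioc (-1:ℝ) x) = volume.restrict (Ioc (-1:ℝ) x) := by
    intro x hx
    rw [Measure.restrict_restrict measurableSet_Ioc, inter_eq_left.mpr]
    exact fun s hs => ⟨hs.1, lt_of_le_of_lt hs.2 hx.2⟩
  have step1 : ∀ x ∈ Ioo (-1:ℝ) 1,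
      (‖∫ s in (-1:ℝ)..x, φ s‖₊ : ℝ≥0∞)^(2:ℝ) ≤ A x * ∫⁻ s in Ioc (-1:ℝ) x, F s := by
    intro x hx
    have hx1 : (-1:ℝ) ≤ x := hx.1.le
    set ν := volume.restrict (Ioc (-1:ℝ) x) with hν
    have hφν : AEMeasurable (fun s => (‖φ s‖₊ : ℝ≥0∞)) ν := by
      rw [hν, ← hrestr x hx]
      exact hφ.aestronglyMeasurable.enorm.restrict
    have e2 : (‖∫ s in (-1:ℝ)..x, φ s‖₊ : ℝ≥0∞) ≤ ∫⁻ s, (‖φ s‖₊:ℝ≥0∞) ∂ν := by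
      rw [intervalIntegral.integral_of_le hx1]
      exact enorm_integral_le_lintegral_enorm _
    set f : ℝ → ℝ≥0∞ := fun s => (ENNReal.ofReal (ph0 s)) ^ ((2:ℝ)⁻¹) with hf
    set g : ℝ → ℝ≥0∞ := fun s => (‖φ s‖₊ : ℝ≥0∞) * (ENNReal.ofReal (ph0 s)) ^ (-(2:ℝ)⁻¹) with hg
    have hfmeas : AEMeasurable f ν :=
      ((ENNReal.measurable_ofReal.comp hph0c.measurable).aemeasurable.pow
        aemeasurable_const)
    have hgmeas : AEMeasurable g ν :=
      hφν.mul ((ENNReal.measurable_ofReal.comp hph0c.measurable).aemeasurable.pow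
        aemeasurable_const)
    have hfg : ∀ᵐ s ∂ν, (‖φ s‖₊ : ℝ≥0∞) = (f * g) s := by
      filter_upwards [ae_restrict_mem measurableSet_Ioc] with s hs
      have hp : 0 < ph0 s := ph0_pos hs.1 (lt_of_le_of_lt hs.2 hx.2)
      have h0 : ENNReal.ofReal (ph0 s) ≠ 0 := (ENNReal.ofReal_pos.mpr hp).ne'
      have : (f * g) s = (‖φ s‖₊ : ℝ≥0∞) *
          ((ENNReal.ofReal (ph0 s)) ^ ((2:ℝ)⁻¹) * (ENNReal.ofReal (ph0 s)) ^ (-(2:ℝ)⁻¹)) := by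
        simp only [hf, hg, Pi.mul_apply]; ring
      rw [this, ← ENNReal.rpow_add _ _ h0 ENNReal.ofReal_ne_top]
      norm_num
    have holder := ENNReal.lintegral_mul_le_Lp_mul_Lq ν ((by constructor <;> norm_num : Real.HolderConjugate 2 2)) hfmeas hgmeas
    have hf2 : ∫⁻ s, f s ^ (2:ℝ) ∂ν = A x := by
      have hpt : ∀ s, f s ^ (2:ℝ) = ENNReal.ofReal (ph0 s) := by
        intro s; rw [hf]; simp only [← ENNReal.rpow_mul]; norm_num
      simp only [hpt]
      rw [← ofReal_integral_eq_lintegral_ofReal (hph0c.integrableOn_Ioc) ?_]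
      · rw [hA]
        congr 1
        rw [← intervalIntegral.integral_of_le hx1, L1]
      · filter_upwards [ae_restrict_mem measurableSet_Ioc] with s hs
        exact (ph0_pos hs.1 (lt_of_le_of_lt hs.2 hx.2)).le
    have hg2 : ∀ s, g s ^ (2:ℝ) = F s := by
      intro s
      rw [hg, hF, ENNReal.mul_rpow_of_nonneg _ _ (by norm_num : (0:ℝ) ≤ 2),
        ← ENNReal.rpow_mul]
      norm_num [ENNReal.rpow_neg_one]
    calc (‖∫ s in (-1:ℝ)..x, φ s‖₊ : ℝ≥0∞)^(2:ℝ)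
        ≤ (∫⁻ s, (‖φ s‖₊:ℝ≥0∞) ∂ν)^(2:ℝ) := ENNReal.rpow_le_rpow e2 (by norm_num)
      _ = (∫⁻ s, (f * g) s ∂ν)^(2:ℝ) := by rw [lintegral_congr_ae hfg]
      _ ≤ ((∫⁻ s, f s ^ (2:ℝ) ∂ν) ^ ((1:ℝ)/2) * (∫⁻ s, g s ^ (2:ℝ) ∂ν) ^ ((1:ℝ)/2))^(2:ℝ) :=
          ENNReal.rpow_le_rpow holder (by norm_num)
      _ = (∫⁻ s, f s ^ (2:ℝ) ∂ν) * (∫⁻ s, g s ^ (2:ℝ) ∂ν) := by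
          rw [ENNReal.mul_rpow_of_nonneg _ _ (by norm_num : (0:ℝ) ≤ 2),
            ← ENNReal.rpow_mul, ← ENNReal.rpow_mul]
          norm_num
      _ = A x * ∫⁻ s in Ioc (-1:ℝ) x, F s := by
          rw [hf2, hν]
          congr 1
          exact lintegral_congr fun s => hg2 s
  -- measurability of F
  have hFmeas : AEMeasurable F μ01 := by
    refine AEMeasurable.mul ?_ ?_
    · exact hφ.aestronglyMeasurable.enorm.pow aemeasurable_const
    · exact ((ENNReal.measurable_ofReal.comp (by unfold ph0; fun_prop)).inv).aemeasurable
  -- restriction identity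
  have hrestr : ∀ x ∈ Ioo (-1:ℝ) 1,
      μ01.restrict (Ioc (-1:ℝ) x) = volume.restrict (Ioc (-1:ℝ) x) := by
    intro x hx
    rw [Measure.restrict_restrict measurableSet_Ioc, inter_eq_left.mpr]
    exact fun s hs => ⟨hs.1, lt_of_le_of_lt hs.2 hx.2⟩
  -- main chain
  have main : ∫⁻ x, (‖∫ s in (-1:ℝ)..x, φ s‖₊ : ℝ≥0∞)^(2:ℝ) ∂μ01
      ≤ ENNReal.ofReal (16/π^2) := by
    have c1 : ∫⁻ x, (‖∫ s in (-1:ℝ)..x, φ s‖₊ : ℝ≥0∞)^(2:ℝ) ∂μ01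
        ≤ ∫⁻ x, ∫⁻ s, K x s ∂μ01 ∂μ01 := by
      refine lintegral_mono_ae ?_
      filter_upwards [ae_restrict_mem measurableSet_Ioo] with x hx
      refine le_trans (step1 x hx) (le_of_eq ?_)
      rw [hK]
      simp only
      rw [lintegral_const_mul' _ _ (hAne x), lintegral_indicator measurableSet_Ioc,
        hrestr x hx]
    have c2 : ∫⁻ x, ∫⁻ s, K x s ∂μ01 ∂μ01 = ∫⁻ s, ∫⁻ x, K x s ∂μ01 ∂μ01 := by
      refine lintegral_lintegral_swap ?_
      have hSm : MeasurableSet {q : ℝ × ℝ | -1 < q.2 ∧ q.2 ≤ q.1} :=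
        (measurableSet_lt measurable_const measurable_snd).inter
          (measurableSet_le measurable_snd measurable_fst)
      have heq : Function.uncurry K =
          fun q : ℝ × ℝ => A q.1 *
            ({q : ℝ × ℝ | -1 < q.2 ∧ q.2 ≤ q.1}.indicator (fun r => F r.2) q) := by
        funext q
        rcases q with ⟨x, s⟩
        simp only [Function.uncurry, hK]
        congr 1
      rw [heq]
      refine AEMeasurable.mul ?_ ?_
      · exact ((ENNReal.measurable_ofReal.comp
          (show Continuous fun x : ℝ => 4/π * ps0 x by unfold ps0; fun_prop).measurable).comp
            measurable_fst).aemeasurable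
      · exact (hFmeas.comp_quasiMeasurePreserving
          Measure.quasiMeasurePreserving_snd).indicator hSm
    have c3 : ∫⁻ s, ∫⁻ x, K x s ∂μ01 ∂μ01
        = ∫⁻ s, ENNReal.ofReal (16/π^2) * (‖φ s‖₊ : ℝ≥0∞)^(2:ℝ) ∂μ01 := by
      refine lintegral_congr_ae ?_
      filter_upwards [ae_restrict_mem measurableSet_Ioo] with s hs
      have hFs : F s ≠ ⊤ := by
        rw [hF]
        exact ENNReal.mul_ne_top
          (ENNReal.rpow_ne_top_of_nonneg (by norm_num) ENNReal.coe_ne_top)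
          (ENNReal.inv_ne_top.mpr (ENNReal.ofReal_pos.mpr (ph0_pos hs.1 hs.2)).ne')
      have heq : (fun x => K x s) = (Ici s).indicator (fun x => A x * F s) := by
        funext x
        rw [hK]
        simp only
        by_cases h : s ≤ x
        · rw [Set.indicator_of_mem (mem_Ici.mpr h),
            Set.indicator_of_mem (show s ∈ Ioc (-1:ℝ) x from ⟨hs.1, h⟩)]
        · rw [Set.indicator_of_notMem (fun hc => h (mem_Ici.mp hc)),
            Set.indicator_of_notMem (show s ∉ Ioc (-1:ℝ) x from fun hc => h hc.2),
            mul_zero]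
      rw [heq, lintegral_indicator measurableSet_Ici]
      have hres2 : μ01.restrict (Ici s) = volume.restrict (Ico s 1) := by
        rw [Measure.restrict_restrict measurableSet_Ici]
        congr 1
        ext y
        simp only [mem_inter_iff, mem_Ici, mem_Ioo, mem_Ico]
        constructor
        · rintro ⟨h1, _, h3⟩; exact ⟨h1, h3⟩
        · rintro ⟨h1, h2⟩; exact ⟨h1, lt_of_lt_of_le hs.1 h1, h2⟩
      rw [hres2, Measure.restrict_congr_set Ico_ae_eq_Ioc,
        lintegral_mul_const' _ _ hFs]
      have hInt : ∫⁻ x in Ioc s 1, A x = ENNReal.ofReal (16/π^2 * ph0 s) := by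
        rw [hA]
        rw [← ofReal_integral_eq_lintegral_ofReal
          (Continuous.integrableOn_Ioc (by unfold ps0; fun_prop)) ?_]
        · congr 1
          rw [← intervalIntegral.integral_of_le hs.2.le,
            intervalIntegral.integral_const_mul, L4]
          ring
        · filter_upwards [ae_restrict_mem measurableSet_Ioc] with y hy
          exact mul_nonneg (by positivity)
            (ps0_nonneg (by linarith [hs.1, hy.1]) hy.2)
      rw [hInt, ENNReal.ofReal_mul (by positivity)]
      have hp0 : ENNReal.ofReal (ph0 s) ≠ 0 :=
        (ENNReal.ofReal_pos.mpr (ph0_pos hs.1 hs.2)).ne'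
      have hFs2 : F s = (‖φ s‖₊:ℝ≥0∞)^(2:ℝ) * (ENNReal.ofReal (ph0 s))⁻¹ := by
        simp only [hF]
      rw [hFs2]
      calc ENNReal.ofReal (16/π^2) * ENNReal.ofReal (ph0 s) *
            ((‖φ s‖₊:ℝ≥0∞)^(2:ℝ) * (ENNReal.ofReal (ph0 s))⁻¹)
          = ENNReal.ofReal (16/π^2) * (‖φ s‖₊:ℝ≥0∞)^(2:ℝ) *
              ((ENNReal.ofReal (ph0 s))⁻¹ * ENNReal.ofReal (ph0 s)) := by ring
        _ = ENNReal.ofReal (16/π^2) * (‖φ s‖₊:ℝ≥0∞)^(2:ℝ) := by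
            rw [ENNReal.inv_mul_cancel hp0 ENNReal.ofReal_ne_top, mul_one]
    rw [c2, c3] at c1
    rw [lintegral_const_mul' _ _ ENNReal.ofReal_ne_top, key, mul_one] at c1
    exact c1
  -- conclude
  have efin : eLpNorm (fun x => ∫ s in (-1:ℝ)..x, φ s) 2 μ01 ≤ ENNReal.ofReal (4/π) := by
    rw [eLpNorm_eq_lintegral_rpow_enorm_toReal (by norm_num) (by norm_num)]
    simp only [ENNReal.toReal_ofNat]
    calc (∫⁻ x, (‖∫ s in (-1:ℝ)..x, φ s‖₊ : ℝ≥0∞)^(2:ℝ) ∂μ01) ^ ((1:ℝ)/2)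
        ≤ (ENNReal.ofReal (16/π^2)) ^ ((1:ℝ)/2) :=
          ENNReal.rpow_le_rpow main (by norm_num)
      _ = ENNReal.ofReal (4/π) := by
          rw [ENNReal.ofReal_rpow_of_pos (by positivity)]
          congr 1
          rw [show (16:ℝ)/π^2 = (4/π)^2 by ring, ← Real.rpow_natCast (4/π) 2,
            ← Real.rpow_mul (by positivity)]
          norm_num
  calc (eLpNorm (fun x => ∫ s in (-1:ℝ)..x, φ s) 2 μ01).toReal
      ≤ (ENNReal.ofReal (4/π)).toReal := ENNReal.toReal_mono ENNReal.ofReal_ne_top efin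
    _ = 4/π := ENNReal.toReal_ofReal (by positivity)

/-- The operator norm of the indefinite integration operator
`(Rφ)(x) = ∫_{-1}^x φ(s) ds` on `L²(-1,1)`, i.e. the supremum of `‖Rφ‖` over all
`φ ∈ L²(-1,1)` with `‖φ‖ = 1`, equals `4/π`. -/
theorem opNorm_indefinite_integration_eq :
    sSup {c : ℝ | ∃ φ : ℝ → ℝ,
        MeasureTheory.MemLp φ 2 (volume.restrict (Ioo (-1 : ℝ) 1)) ∧
        (eLpNorm φ 2 (volume.restrict (Ioo (-1 : ℝ) 1))).toReal = 1 ∧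
        c = (eLpNorm (fun x => ∫ s in (-1 : ℝ)..x, φ s) 2
              (volume.restrict (Ioo (-1 : ℝ) 1))).toReal}
      = 4 / Real.pi := by
  have hmem : (4/Real.pi : ℝ) ∈ {c : ℝ | ∃ φ : ℝ → ℝ,
      MeasureTheory.MemLp φ 2 (volume.restrict (Ioo (-1 : ℝ) 1)) ∧
      (eLpNorm φ 2 (volume.restrict (Ioo (-1 : ℝ) 1))).toReal = 1 ∧
      c = (eLpNorm (fun x => ∫ s in (-1 : ℝ)..x, φ s) 2
            (volume.restrict (Ioo (-1 : ℝ) 1))).toReal} :=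
    ⟨ph0, memLp_of_continuous (by unfold ph0; fun_prop), ph0_norm, Rph0_norm.symm⟩
  apply le_antisymm
  · refine csSup_le ⟨_, hmem⟩ ?_
    rintro c ⟨φ, h1, h2, rfl⟩
    exact upper φ h1 h2
  · refine le_csSup ⟨4/Real.pi, ?_⟩ hmem
    rintro c ⟨φ, h1, h2, rfl⟩
    exact upper φ h1 h2
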